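/- arXiv:2404.13662 — 3 statements merged into one kernel-verified Lean document; each statement's English description precedes it below -/
import Mathlib

section
/- Let G be a symmetric n×n real matrix with nonnegative entries, and let β ∈ (0,1), δ > 0, μ ≥ 0 satisfy μ < βδ and max{(δ+μ)/(1+β), (δ−μ)/(1−β)}·ρ(G) < 1, where ρ(G) is the spectral radius of G. Then for every real eigenvalue λ of G, β − μλ > 0; consequently the matrix M^- − M^+, where M^+ = ((1+β)I − (δ+μ)G)^{-1} and M^- = ((1−β)I − (δ−μ)G)^{-1}, is invertible. -/
open Matrix
/-- The spectral radius of a real matrix: the supremum of the absolute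
values of its (real) eigenvalues. -/
noncomputable def specRad {n : ℕ} (G : Matrix (Fin n) (Fin n) ℝ) : ℝ :=
  sSup ((fun l => |l|) '' spectrum ℝ G)

lemma abs_le_specRad {n : ℕ} (G : Matrix (Fin n) (Fin n) ℝ) {l : ℝ}
    (hl : l ∈ spectrum ℝ G) : |l| ≤ specRad G :=
  le_csSup ((Matrix.finite_spectrum G).image _).bddAbove ⟨l, hl, rfl⟩

lemma unit_of_not_spec {n : ℕ} (G : Matrix (Fin n) (Fin n) ℝ) {c d : ℝ}
    (hd : d ≠ 0) (h : c / d ∉ spectrum ℝ G) :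
    IsUnit (c • (1 : Matrix (Fin n) (Fin n) ℝ) - d • G) := by
  rw [spectrum.notMem_iff, Algebra.algebraMap_eq_smul_one] at h
  have key : c • (1 : Matrix (Fin n) (Fin n) ℝ) - d • G
      = (d • (1 : Matrix (Fin n) (Fin n) ℝ)) * ((c / d) • 1 - G) := by
    rw [mul_sub, smul_mul_assoc, one_mul, smul_smul, mul_div_cancel₀ _ hd,
      smul_mul_assoc, one_mul]
  rw [key]
  refine IsUnit.mul ?_ h
  have := (algebraMap ℝ (Matrix (Fin n) (Fin n) ℝ)).isUnit_map (isUnit_iff_ne_zero.mpr hd)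
  rwa [Algebra.algebraMap_eq_smul_one] at this

theorem stmt2 {n : ℕ} (G : Matrix (Fin n) (Fin n) ℝ)
    (hGsymm : G.IsSymm) (hGnn : ∀ i j, 0 ≤ G i j)
    (β δ μ : ℝ) (hβ0 : 0 < β) (hβ1 : β < 1) (hδ : 0 < δ) (hμ : 0 ≤ μ)
    (hdom : μ < β * δ)
    (hspec : max ((δ + μ) / (1 + β)) ((δ - μ) / (1 - β)) * specRad G < 1) :
    (∀ l ∈ spectrum ℝ G, 0 < β - μ * l) ∧
      IsUnit
        (((1 - β) • (1 : Matrix (Fin n) (Fin n) ℝ) - (δ - μ) • G)⁻¹ -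
          ((1 + β) • (1 : Matrix (Fin n) (Fin n) ℝ) - (δ + μ) • G)⁻¹) := by
  have hδμ : 0 < δ - μ := by nlinarith
  have hδμ' : 0 < δ + μ := by linarith
  have hρ0 : 0 ≤ specRad G := Real.sSup_nonneg (by rintro x ⟨l, -, rfl⟩; exact abs_nonneg l)
  -- bounds on specRad
  have hmax1 : (δ + μ) / (1 + β) ≤ max ((δ + μ) / (1 + β)) ((δ - μ) / (1 - β)) := le_max_left _ _
  have hmax2 : (δ - μ) / (1 - β) ≤ max ((δ + μ) / (1 + β)) ((δ - μ) / (1 - β)) := le_max_right _ _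
  have hρ1 : specRad G * (δ + μ) < 1 + β := by
    have h := mul_le_mul_of_nonneg_right hmax1 hρ0
    rw [div_mul_eq_mul_div, div_le_iff₀ (by linarith : (0:ℝ) < 1 + β)] at h
    nlinarith
  have hρ2 : specRad G * (δ - μ) < 1 - β := by
    have h := mul_le_mul_of_nonneg_right hmax2 hρ0
    rw [div_mul_eq_mul_div, div_le_iff₀ (by linarith : (0:ℝ) < 1 - β)] at h
    nlinarith
  have part1 : ∀ l ∈ spectrum ℝ G, 0 < β - μ * l := by
    intro l hl
    have h1 : μ * l ≤ μ * specRad G :=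
      mul_le_mul_of_nonneg_left (le_trans (le_abs_self l) (abs_le_specRad G hl)) hμ
    have h2 : μ * (specRad G * (δ - μ)) ≤ μ * (1 - β) :=
      mul_le_mul_of_nonneg_left hρ2.le hμ
    nlinarith
  refine ⟨part1, ?_⟩
  set A : Matrix (Fin n) (Fin n) ℝ := (1 - β) • 1 - (δ - μ) • G with hAdef
  set B : Matrix (Fin n) (Fin n) ℝ := (1 + β) • 1 - (δ + μ) • G with hBdef
  have hA : IsUnit A := by
    refine unit_of_not_spec G (ne_of_gt hδμ) (fun hmem => ?_)
    have h := le_trans (le_abs_self _) (abs_le_specRad G hmem)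
    rw [div_le_iff₀ hδμ] at h
    linarith
  have hB : IsUnit B := by
    refine unit_of_not_spec G (ne_of_gt hδμ') (fun hmem => ?_)
    have h := le_trans (le_abs_self _) (abs_le_specRad G hmem)
    rw [div_le_iff₀ hδμ'] at h
    linarith
  have hBA : B - A = (2*β) • (1 : Matrix (Fin n) (Fin n) ℝ) - (2*μ) • G := by
    rw [hAdef, hBdef]; module
  have hC : IsUnit (B - A) := by
    rw [hBA]
    rcases eq_or_lt_of_le hμ with hμ0 | hμpos
    · have : ((2*μ) : ℝ) = 0 := by rw [← hμ0]; ring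
      rw [this, zero_smul, sub_zero]
      have := (algebraMap ℝ (Matrix (Fin n) (Fin n) ℝ)).isUnit_map
        (isUnit_iff_ne_zero.mpr (by positivity : (2*β : ℝ) ≠ 0))
      rwa [Algebra.algebraMap_eq_smul_one] at this
    · refine unit_of_not_spec G (by positivity) (fun hmem => ?_)
      have h := part1 _ hmem
      have : (2*β) / (2*μ) = β / μ := by
        rw [mul_div_mul_left _ _ (two_ne_zero)]
      rw [this, mul_div_cancel₀ _ (ne_of_gt hμpos)] at h
      linarith
  have hAd : IsUnit A.det := (Matrix.isUnit_iff_isUnit_det A).mp hA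
  have hBd : IsUnit B.det := (Matrix.isUnit_iff_isUnit_det B).mp hB
  have e : A⁻¹ - B⁻¹ = A⁻¹ * (B - A) * B⁻¹ := by
    rw [Matrix.mul_sub, Matrix.nonsing_inv_mul A hAd, Matrix.sub_mul, one_mul,
      Matrix.mul_assoc, Matrix.mul_nonsing_inv B hBd, Matrix.mul_one]
  rw [e]
  exact ((Matrix.isUnit_nonsing_inv_iff.mpr hA).mul hC).mul (Matrix.isUnit_nonsing_inv_iff.mpr hB)
end

section
/- Let G be an irreducible symmetric n×n nonnegative matrix, β ∈ (0,1), δ > 0, μ ≥ 0 with μ < βδ and max{(δ+μ)/(1+β), (δ−μ)/(1−β)}·ρ(G) < 1. Then all entries of M^- − M^+ are positive, where M^+ = ((1+β)I − (δ+μ)G)^{-1} and M^- = ((1−β)I − (δ−μ)G)^{-1}. -/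
open Matrix

namespace StmtAux

variable {n : ℕ}

lemma mconj_pow (U A : Matrix (Fin n) (Fin n) ℝ)
    (h1 : star U * U = 1) (h2 : U * star U = 1) (k : ℕ) :
    (U * A * star U) ^ k = U * A ^ k * star U := by
  induction k with
  | zero => simp [h2]
  | succ k ih =>
      rw [pow_succ, ih, pow_succ]
      simp only [Matrix.mul_assoc]
      rw [← Matrix.mul_assoc (star U) U (A * star U), h1, Matrix.one_mul]

lemma pow_eq (G : Matrix (Fin n) (Fin n) ℝ) (hG : G.IsHermitian) (k : ℕ) :
    G ^ k = (hG.eigenvectorUnitary : Matrix (Fin n) (Fin n) ℝ) *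
      (Matrix.diagonal (hG.eigenvalues ·) ^ k) *
      star (hG.eigenvectorUnitary : Matrix (Fin n) (Fin n) ℝ) := by
  have := mconj_pow (hG.eigenvectorUnitary : Matrix (Fin n) (Fin n) ℝ)
    (Matrix.diagonal (hG.eigenvalues ·))
    (Matrix.mem_unitaryGroup_iff'.mp hG.eigenvectorUnitary.2)
    (Matrix.mem_unitaryGroup_iff.mp hG.eigenvectorUnitary.2) k
  rw [← this]
  congr 1
  have h : (Matrix.diagonal (RCLike.ofReal ∘ hG.eigenvalues) : Matrix (Fin n) (Fin n) ℝ)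
      = Matrix.diagonal (hG.eigenvalues ·) := rfl
  rw [← h]; exact hG.spectral_theorem

lemma eig_le (G : Matrix (Fin n) (Fin n) ℝ) (hG : G.IsHermitian) (t : Fin n) :
    |hG.eigenvalues t| ≤ specRad G := by
  apply le_csSup
  · exact ((G.finite_spectrum).image _).bddAbove
  · exact Set.mem_image_of_mem _ (hG.eigenvalues_mem_spectrum_real t)

lemma specRad_nonneg (G : Matrix (Fin n) (Fin n) ℝ) (hG : G.IsHermitian)
    (t : Fin n) : 0 ≤ specRad G :=
  le_trans (abs_nonneg _) (eig_le G hG t)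

lemma entry_bound (G : Matrix (Fin n) (Fin n) ℝ) (hG : G.IsHermitian)
    (hr : 0 ≤ specRad G) (i j : Fin n) :
    ∃ C : ℝ, 0 ≤ C ∧ ∀ k : ℕ, |(G ^ k) i j| ≤ C * (specRad G) ^ k := by
  set U := (hG.eigenvectorUnitary : Matrix (Fin n) (Fin n) ℝ)
  refine ⟨∑ t, |U i t| * |(star U) t j|,
    Finset.sum_nonneg fun t _ => mul_nonneg (abs_nonneg _) (abs_nonneg _), fun k => ?_⟩
  have hk : (G ^ k) i j = ∑ t, U i t * ((hG.eigenvalues t) ^ k * (star U) t j) := by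
    rw [pow_eq G hG k, Matrix.mul_assoc, Matrix.mul_apply]
    congr 1
    funext t
    simp only [Matrix.diagonal_pow, Matrix.diagonal_mul, Pi.pow_apply]
    rfl
  rw [hk]
  calc |∑ t, U i t * ((hG.eigenvalues t) ^ k * (star U) t j)|
      ≤ ∑ t, |U i t * ((hG.eigenvalues t) ^ k * (star U) t j)| := Finset.abs_sum_le_sum_abs _ _
    _ ≤ ∑ t, |U i t| * |(star U) t j| * (specRad G) ^ k := by
        apply Finset.sum_le_sum
        intro t _
        rw [abs_mul, abs_mul]
        have h1 : |(hG.eigenvalues t) ^ k| ≤ (specRad G) ^ k := by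
          rw [abs_pow]
          exact pow_le_pow_left₀ (abs_nonneg _) (eig_le G hG t) k
        calc |U i t| * (|(hG.eigenvalues t) ^ k| * |(star U) t j|)
            = |U i t| * |(star U) t j| * |(hG.eigenvalues t) ^ k| := by ring
          _ ≤ |U i t| * |(star U) t j| * (specRad G) ^ k :=
              mul_le_mul_of_nonneg_left h1 (by positivity)
    _ = (∑ t, |U i t| * |(star U) t j|) * (specRad G) ^ k := by rw [Finset.sum_mul]

lemma summable_entry (G : Matrix (Fin n) (Fin n) ℝ) (hG : G.IsHermitian)
    (hr : 0 ≤ specRad G) (a : ℝ) (ha : 0 ≤ a) (h1 : a * specRad G < 1) (i j : Fin n) :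
    Summable (fun k : ℕ => a ^ k * (G ^ k) i j) := by
  obtain ⟨C, hC, hbd⟩ := entry_bound G hG hr i j
  apply Summable.of_norm_bounded (g := fun k => C * (a * specRad G) ^ k)
    (((summable_geometric_of_lt_one (by positivity) h1)).mul_left C)
  intro k
  rw [Real.norm_eq_abs, abs_mul, abs_pow, abs_of_nonneg ha, mul_pow]
  calc a ^ k * |(G ^ k) i j| ≤ a ^ k * (C * specRad G ^ k) := by
        exact mul_le_mul_of_nonneg_left (hbd k) (by positivity)
    _ = C * (a ^ k * specRad G ^ k) := by ring

lemma summable_matrix (G : Matrix (Fin n) (Fin n) ℝ) (hG : G.IsHermitian)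
    (hr : 0 ≤ specRad G) (a : ℝ) (ha : 0 ≤ a) (h1 : a * specRad G < 1) :
    Summable (fun k : ℕ => (a • G) ^ k) := by
  refine Pi.summable.2 ?_
  intro i
  rw [Pi.summable]
  intro j
  have : (fun k : ℕ => ((a • G) ^ k) i j) = fun k => a ^ k * (G ^ k) i j := by
    funext k
    rw [smul_pow, Matrix.smul_apply, smul_eq_mul]
  exact this ▸ summable_entry G hG hr a ha h1 i j

lemma one_sub_mul_tsum (x : Matrix (Fin n) (Fin n) ℝ)
    (hx : Summable fun k : ℕ => x ^ k) :
    (1 - x) * ∑' k : ℕ, x ^ k = 1 := by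
  have h1 : HasSum (fun k : ℕ => x * x ^ k) (x * ∑' k : ℕ, x ^ k) :=
    hx.hasSum.map (AddMonoidHom.mulLeft x) (continuous_const.matrix_mul continuous_id)
  have h2 : ∑' k : ℕ, x ^ (k + 1) = (∑' k : ℕ, x ^ k) - 1 := by
    have h := hx.tsum_eq_zero_add
    rw [pow_zero] at h
    rw [h]; abel
  have h3 : x * ∑' k : ℕ, x ^ k = (∑' k : ℕ, x ^ k) - 1 := by
    rw [← h2, ← h1.tsum_eq]
    exact tsum_congr fun k => (pow_succ' x k).symm
  rw [Matrix.sub_mul, Matrix.one_mul, h3, sub_sub_cancel]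

lemma inv_smul_one_sub (G : Matrix (Fin n) (Fin n) ℝ) (c a : ℝ) (hc : c ≠ 0)
    (hs : Summable fun k : ℕ => (a • G) ^ k) :
    (c • (1 : Matrix (Fin n) (Fin n) ℝ) - (c * a) • G)⁻¹
      = c⁻¹ • ∑' k : ℕ, (a • G) ^ k := by
  apply Matrix.inv_eq_right_inv
  have h : c • (1 : Matrix (Fin n) (Fin n) ℝ) - (c * a) • G
      = c • ((1 : Matrix (Fin n) (Fin n) ℝ) - a • G) := by
    rw [smul_sub, smul_smul]
  rw [h, Matrix.smul_mul, Matrix.mul_smul, smul_smul, mul_inv_cancel₀ hc, one_smul,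
    one_sub_mul_tsum _ hs]

lemma pow_entry_nonneg (G : Matrix (Fin n) (Fin n) ℝ) (hGnn : ∀ i j, 0 ≤ G i j) (k : ℕ) :
    ∀ i j, 0 ≤ (G ^ k) i j := by
  induction k with
  | zero => intro i j; rw [pow_zero]; by_cases h : i = j <;> simp [Matrix.one_apply, h]
  | succ k ih =>
      intro i j
      rw [pow_succ, Matrix.mul_apply]
      exact Finset.sum_nonneg fun t _ => mul_nonneg (ih i t) (hGnn t j)

end StmtAux

open StmtAux in
theorem stmt3 {n : ℕ} (G : Matrix (Fin n) (Fin n) ℝ)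
    (hGsymm : G.IsSymm) (hGnn : ∀ i j, 0 ≤ G i j)
    (hGirr : ∀ i j, ∃ k : ℕ, 0 < (G ^ k) i j)
    (β δ μ : ℝ) (hβ0 : 0 < β) (hβ1 : β < 1) (hδ : 0 < δ) (hμ : 0 ≤ μ)
    (hdom : μ < β * δ)
    (hspec : max ((δ + μ) / (1 + β)) ((δ - μ) / (1 - β)) * specRad G < 1) :
    ∀ i j,
      0 < (((1 - β) • (1 : Matrix (Fin n) (Fin n) ℝ) - (δ - μ) • G)⁻¹ -
            ((1 + β) • (1 : Matrix (Fin n) (Fin n) ℝ) - (δ + μ) • G)⁻¹) i j := by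
  intro i j
  have hG : G.IsHermitian := by
    rwa [Matrix.IsHermitian, Matrix.conjTranspose_eq_transpose_of_trivial]
  have hr : 0 ≤ specRad G := specRad_nonneg G hG i
  set cp : ℝ := 1 + β with hcp
  set cm : ℝ := 1 - β with hcm
  have hcp0 : 0 < cp := by positivity
  have hcm0 : 0 < cm := by simp only [hcm]; linarith
  set ap : ℝ := (δ + μ) / cp with hap
  set am : ℝ := (δ - μ) / cm with ham
  have hμδ : μ < δ := lt_of_lt_of_le hdom (by nlinarith)
  have hap0 : 0 < ap := div_pos (by linarith) hcp0
  have ham0 : 0 < am := div_pos (by linarith) hcm0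
  have hapam : ap < am := by
    rw [hap, ham, div_lt_div_iff₀ hcp0 hcm0]
    nlinarith
  have hsp : ap * specRad G < 1 :=
    lt_of_le_of_lt (mul_le_mul_of_nonneg_right (le_max_left _ _) hr) hspec
  have hsm : am * specRad G < 1 :=
    lt_of_le_of_lt (mul_le_mul_of_nonneg_right (le_max_right _ _) hr) hspec
  have hSp := summable_matrix G hG hr ap hap0.le hsp
  have hSm := summable_matrix G hG hr am ham0.le hsm
  have hep := summable_entry G hG hr ap hap0.le hsp i j
  have hem := summable_entry G hG hr am ham0.le hsm i j
  -- rewrite the two matrices in smul form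
  have hmp : (1 + β) • (1 : Matrix (Fin n) (Fin n) ℝ) - (δ + μ) • G
      = cp • (1 : Matrix (Fin n) (Fin n) ℝ) - (cp * ap) • G := by
    rw [hap, mul_div_cancel₀ _ hcp0.ne']
  have hmm : (1 - β) • (1 : Matrix (Fin n) (Fin n) ℝ) - (δ - μ) • G
      = cm • (1 : Matrix (Fin n) (Fin n) ℝ) - (cm * am) • G := by
    rw [ham, mul_div_cancel₀ _ hcm0.ne']
  rw [hmp, hmm, inv_smul_one_sub G cp ap hcp0.ne' hSp, inv_smul_one_sub G cm am hcm0.ne' hSm]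
  -- compute the (i,j) entry
  have hentry : ∀ (a c : ℝ) (hS : Summable fun k : ℕ => (a • G) ^ k),
      (c • ∑' k : ℕ, (a • G) ^ k) i j = ∑' k : ℕ, c * (a ^ k * (G ^ k) i j) := by
    intro a c hS
    rw [Matrix.smul_apply, smul_eq_mul]
    have h1 : (∑' k : ℕ, (a • G) ^ k) i j = ∑' k : ℕ, ((a • G) ^ k) i j := by
      exact (congrFun (tsum_apply hS) j).trans (tsum_apply (Pi.summable.1 hS i))
    rw [h1]
    have h2 : (fun k : ℕ => ((a • G) ^ k) i j) = fun k : ℕ => a ^ k * (G ^ k) i j := by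
      funext k; rw [smul_pow, Matrix.smul_apply, smul_eq_mul]
    rw [h2, ← tsum_mul_left]
  rw [Matrix.sub_apply, hentry am cm⁻¹ hSm, hentry ap cp⁻¹ hSp]
  rw [← Summable.tsum_sub (hem.mul_left cm⁻¹) (hep.mul_left cp⁻¹)]
  have hcoef : ∀ k : ℕ, cp⁻¹ * ap ^ k < cm⁻¹ * am ^ k := by
    intro k
    have h1 : cp⁻¹ < cm⁻¹ := by
      apply inv_strictAnti₀ hcm0
      simp only [hcp, hcm]; linarith
    have h2 : (0:ℝ) < ap ^ k := pow_pos hap0 k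
    have h3 : ap ^ k ≤ am ^ k := pow_le_pow_left₀ hap0.le hapam.le k
    have h4 : (0:ℝ) < cp⁻¹ := by positivity
    nlinarith
  obtain ⟨k₀, hk₀⟩ := hGirr i j
  refine Summable.tsum_pos (Summable.sub (hem.mul_left cm⁻¹) (hep.mul_left cp⁻¹)) ?_ k₀ ?_
  · intro k
    have := hcoef k
    have hg := pow_entry_nonneg G hGnn k i j
    nlinarith
  · nlinarith [mul_pos (sub_pos.2 (hcoef k₀)) hk₀]
end

section
/- Let G be a symmetric nonnegative n×n matrix, β ∈ (0,1), δ > 0, 0 < μ < βδ, with δρ(G) < 1 and M := (I − δG)^{-1}. Then the matrix δG + (β²I + μ²G² − 2βμG)M is entrywise nonnegative; in fact δG + (βI − μG)²M ≥ β²I + (1−β²)δG entrywise. -/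
open Matrix Finset Filter

-- entrywise nonneg closed under mul
lemma mul_nonneg_entry {n : ℕ} {A B : Matrix (Fin n) (Fin n) ℝ}
    (hA : ∀ i j, 0 ≤ A i j) (hB : ∀ i j, 0 ≤ B i j) : ∀ i j, 0 ≤ (A * B) i j := by
  intro i j
  rw [Matrix.mul_apply]
  exact Finset.sum_nonneg fun k _ => mul_nonneg (hA i k) (hB k j)

lemma inv_nonneg_entry {n : ℕ} (G : Matrix (Fin n) (Fin n) ℝ)
    (hGsymm : G.IsSymm) (hGnn : ∀ i j, 0 ≤ G i j) (δ : ℝ) (hδ : 0 < δ)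
    (hlam : ∀ lam ∈ spectrum ℝ G, |δ * lam| < 1) :
    (((1 : Matrix (Fin n) (Fin n) ℝ) - δ • G) *
      ((1 : Matrix (Fin n) (Fin n) ℝ) - δ • G)⁻¹ = 1 ∧
     ((1 : Matrix (Fin n) (Fin n) ℝ) - δ • G)⁻¹ *
      ((1 : Matrix (Fin n) (Fin n) ℝ) - δ • G) = 1) ∧
    (∀ i j, 0 ≤ ((1 : Matrix (Fin n) (Fin n) ℝ) - δ • G)⁻¹ i j) := by
  classical
  have hH : G.IsHermitian := by
    rw [Matrix.IsHermitian, Matrix.conjTranspose_eq_transpose_of_trivial]; exact hGsymm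
  set U : Matrix (Fin n) (Fin n) ℝ := (hH.eigenvectorUnitary : Matrix (Fin n) (Fin n) ℝ) with hU
  set lam := hH.eigenvalues with hlamdef
  have hUU : U * star U = 1 := Matrix.mem_unitaryGroup_iff.mp hH.eigenvectorUnitary.2
  have hUU' : star U * U = 1 := Matrix.mem_unitaryGroup_iff'.mp hH.eigenvectorUnitary.2
  have hspec : G = U * Matrix.diagonal lam * star U := by
    have := hH.spectral_theorem
    rw [Unitary.conjStarAlgAut_apply] at this
    exact this
  have hl : ∀ k, |δ * lam k| < 1 := fun k => hlam _ (hH.eigenvalues_mem_spectrum_real k)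
  set A : Matrix (Fin n) (Fin n) ℝ := δ • G with hA
  have hApow : ∀ N : ℕ, A ^ N = U * Matrix.diagonal (fun k => (δ * lam k) ^ N) * star U := by
    intro N
    induction N with
    | zero => simp [hUU]
    | succ N ih =>
      rw [pow_succ, ih]
      have hDsm : Matrix.diagonal (fun k => δ * lam k) = δ • Matrix.diagonal lam := by
        rw [← Matrix.diagonal_smul]; rfl
      have : A = U * Matrix.diagonal (fun k => δ * lam k) * star U := by
        rw [hA, hspec, hDsm, Matrix.mul_smul, Matrix.smul_mul]
      rw [this]
      calc U * Matrix.diagonal (fun k => (δ * lam k) ^ N) * star U *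
            (U * Matrix.diagonal (fun k => δ * lam k) * star U)
          = U * (Matrix.diagonal (fun k => (δ * lam k) ^ N) * ((star U * U) *
              Matrix.diagonal (fun k => δ * lam k))) * star U := by
            simp only [Matrix.mul_assoc]
        _ = U * Matrix.diagonal (fun k => (δ * lam k) ^ (N + 1)) * star U := by
            rw [hUU', Matrix.one_mul, Matrix.diagonal_mul_diagonal]
            have hfun : (fun k => (δ * lam k) ^ N * (δ * lam k))
                = fun k => (δ * lam k) ^ (N + 1) := by ext k; ring
            rw [hfun, Matrix.mul_assoc]
  have honesub : (1 : Matrix (Fin n) (Fin n) ℝ) - A =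
      U * Matrix.diagonal (fun k => 1 - δ * lam k) * star U := by
    have h1 : (1 : Matrix (Fin n) (Fin n) ℝ) = U * Matrix.diagonal (fun _ => (1:ℝ)) * star U := by
      simp [hUU]
    have hDsm : Matrix.diagonal (fun k => δ * lam k) = δ • Matrix.diagonal lam := by
      rw [← Matrix.diagonal_smul]; rfl
    have h2 : A = U * Matrix.diagonal (fun k => δ * lam k) * star U := by
      rw [hA, hspec, hDsm, Matrix.mul_smul, Matrix.smul_mul]
    rw [h1, h2, ← Matrix.sub_mul, ← Matrix.mul_sub, Matrix.diagonal_sub]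
  have hdet : IsUnit ((1 : Matrix (Fin n) (Fin n) ℝ) - A).det := by
    rw [honesub]
    rw [Matrix.det_mul, Matrix.det_mul, Matrix.det_diagonal]
    have : U.det * ((∏ k, (1 - δ * lam k))) * (star U).det
        = (∏ k, (1 - δ * lam k)) * (U.det * (star U).det) := by ring
    rw [this]
    have : U.det * (star U).det = 1 := by
      rw [← Matrix.det_mul, hUU, Matrix.det_one]
    rw [this, mul_one]
    apply IsUnit.mk0
    apply Finset.prod_ne_zero_iff.mpr
    intro k _
    have := hl k
    have : δ * lam k < 1 := lt_of_le_of_lt (le_abs_self _) this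
    linarith
  set M := ((1 : Matrix (Fin n) (Fin n) ℝ) - A)⁻¹ with hM
  have hM1 : ((1 : Matrix (Fin n) (Fin n) ℝ) - A) * M = 1 := Matrix.mul_nonsing_inv _ hdet
  have hM2 : M * ((1 : Matrix (Fin n) (Fin n) ℝ) - A) = 1 := Matrix.nonsing_inv_mul _ hdet
  refine ⟨⟨hM1, hM2⟩, ?_⟩
  -- M entries nonneg via geometric sums
  have hAnn : ∀ i j, 0 ≤ A i j := by
    intro i j; rw [hA]; exact smul_nonneg hδ.le (hGnn i j)
  have hpow'nn : ∀ N : ℕ, ∀ i j, 0 ≤ (A ^ N) i j := by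
    intro N
    induction N with
    | zero => intro i j; simp [Matrix.one_apply]; positivity
    | succ N ih => rw [pow_succ]; exact mul_nonneg_entry ih hAnn
  intro i j
  have hgeom : ∀ N : ℕ, (∑ k ∈ Finset.range N, A ^ k) = (1 - A ^ N) * M := by
    intro N
    have h1 : (∑ k ∈ Finset.range N, A ^ k) * (A - 1) = A ^ N - 1 := geom_sum_mul A N
    have h2 : (∑ k ∈ Finset.range N, A ^ k) * (1 - A) = 1 - A ^ N := by
      have := congrArg Neg.neg h1
      rw [← Matrix.mul_neg, neg_sub, neg_sub] at this
      exact this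
    calc (∑ k ∈ Finset.range N, A ^ k)
        = (∑ k ∈ Finset.range N, A ^ k) * ((1 - A) * M) := by rw [hM1, Matrix.mul_one]
      _ = ((∑ k ∈ Finset.range N, A ^ k) * (1 - A)) * M := by rw [Matrix.mul_assoc]
      _ = (1 - A ^ N) * M := by rw [h2]
  have hSnn : ∀ N : ℕ, 0 ≤ ((1 - A ^ N) * M) i j := by
    intro N
    rw [← hgeom]
    have : (∑ k ∈ Finset.range N, A ^ k) i j = ∑ k ∈ Finset.range N, (A ^ k) i j := by
      simp [Matrix.sum_apply]
    rw [this]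
    exact Finset.sum_nonneg fun k _ => hpow'nn k i j
  -- tendsto
  have htend : Tendsto (fun N : ℕ => ((1 - A ^ N) * M) i j) atTop (nhds (M i j)) := by
    have hterm : Tendsto (fun N : ℕ => ((A ^ N) * M) i j) atTop (nhds 0) := by
      have : ∀ N, ((A ^ N) * M) i j = ∑ l, (∑ k, U i k * (δ * lam k) ^ N * U l k) * M l j := by
        intro N
        rw [Matrix.mul_apply]
        congr 1
        ext l
        rw [hApow N]
        congr 1
        simp [Matrix.mul_apply, Matrix.diagonal, Matrix.star_apply, Finset.sum_mul]
      simp only [this]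
      have : Tendsto (fun N : ℕ => ∑ l, (∑ k, U i k * (δ * lam k) ^ N * U l k) * M l j)
          atTop (nhds (∑ l : Fin n, (∑ k : Fin n, U i k * 0 * U l k) * M l j)) := by
        apply tendsto_finset_sum
        intro l _
        apply Tendsto.mul_const
        apply tendsto_finset_sum
        intro k _
        have hg : Tendsto (fun N : ℕ => (δ * lam k) ^ N) atTop (nhds 0) :=
          tendsto_pow_atTop_nhds_zero_of_abs_lt_one (hl k)
        have := (hg.const_mul (U i k)).mul_const (U l k)
        simpa [mul_assoc] using this
      simpa using this
    have : ∀ N, ((1 - A ^ N) * M) i j = M i j - ((A ^ N) * M) i j := by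
      intro N
      rw [Matrix.sub_mul, Matrix.one_mul, Matrix.sub_apply]
    simp only [this]
    simpa using (tendsto_const_nhds (x := M i j)).sub hterm
  exact ge_of_tendsto htend (Eventually.of_forall hSnn)

theorem stmt6 {n : ℕ} (G : Matrix (Fin n) (Fin n) ℝ)
    (hGsymm : G.IsSymm) (hGnn : ∀ i j, 0 ≤ G i j)
    (β δ μ : ℝ) (hβ0 : 0 < β) (hβ1 : β < 1) (hδ : 0 < δ) (hμ0 : 0 < μ)
    (hdom : μ < β * δ) (hρ : δ * specRad G < 1) :
    (∀ i j,
        0 ≤ (δ • G +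
              (β ^ 2 • (1 : Matrix (Fin n) (Fin n) ℝ) + μ ^ 2 • (G * G) -
                  (2 * β * μ) • G) *
                ((1 : Matrix (Fin n) (Fin n) ℝ) - δ • G)⁻¹) i j) ∧
    (∀ i j,
        (β ^ 2 • (1 : Matrix (Fin n) (Fin n) ℝ) + ((1 - β ^ 2) * δ) • G) i j ≤
          (δ • G +
              ((β • (1 : Matrix (Fin n) (Fin n) ℝ) - μ • G) *
                  (β • (1 : Matrix (Fin n) (Fin n) ℝ) - μ • G)) *
                ((1 : Matrix (Fin n) (Fin n) ℝ) - δ • G)⁻¹) i j) := by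
  have hbdd : BddAbove ((fun l => |l|) '' spectrum ℝ G) :=
    ((Matrix.finite_spectrum G).image _).bddAbove
  have hlam : ∀ l ∈ spectrum ℝ G, |δ * l| < 1 := by
    intro l hl
    have h1 : |l| ≤ specRad G := le_csSup hbdd ⟨l, hl, rfl⟩
    have h2 : |δ * l| = δ * |l| := by rw [abs_mul, abs_of_pos hδ]
    nlinarith [abs_nonneg l]
  obtain ⟨⟨hM1, hM2⟩, hMnn⟩ := inv_nonneg_entry G hGsymm hGnn δ hδ hlam
  set M := ((1 : Matrix (Fin n) (Fin n) ℝ) - δ • G)⁻¹ with hMdef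
  have key : (β • (1 : Matrix (Fin n) (Fin n) ℝ) - μ • G) *
        (β • (1 : Matrix (Fin n) (Fin n) ℝ) - μ • G)
      = β ^ 2 • (((1 : Matrix (Fin n) (Fin n) ℝ) - δ • G) *
            ((1 : Matrix (Fin n) (Fin n) ℝ) - δ • G))
        + (2 * β * (β * δ - μ)) • (G * ((1 : Matrix (Fin n) (Fin n) ℝ) - δ • G))
        + ((β * δ - μ) ^ 2) • (G * G) := by
    simp only [Matrix.sub_mul, Matrix.mul_sub, Matrix.smul_mul, Matrix.mul_smul,
      smul_smul, Matrix.mul_one, Matrix.one_mul, smul_sub, sub_smul, add_smul]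
    module
  have key2 : (β • (1 : Matrix (Fin n) (Fin n) ℝ) - μ • G) *
        (β • (1 : Matrix (Fin n) (Fin n) ℝ) - μ • G) * M
      = β ^ 2 • ((1 : Matrix (Fin n) (Fin n) ℝ) - δ • G)
        + (2 * β * (β * δ - μ)) • G + ((β * δ - μ) ^ 2) • (G * G * M) := by
    rw [key, Matrix.add_mul, Matrix.add_mul, Matrix.smul_mul, Matrix.smul_mul,
      Matrix.smul_mul, Matrix.mul_assoc _ _ M, hM1, Matrix.mul_one,
      Matrix.mul_assoc G _ M, hM1, Matrix.mul_one, Matrix.mul_assoc G G M]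
  have key3 : δ • G + (β • (1 : Matrix (Fin n) (Fin n) ℝ) - μ • G) *
        (β • (1 : Matrix (Fin n) (Fin n) ℝ) - μ • G) * M
      = (β ^ 2 • (1 : Matrix (Fin n) (Fin n) ℝ) + ((1 - β ^ 2) * δ) • G)
        + ((2 * β * (β * δ - μ)) • G + ((β * δ - μ) ^ 2) • (G * G * M)) := by
    rw [key2]
    module
  have hpos : ∀ i j,
      0 ≤ ((2 * β * (β * δ - μ)) • G + ((β * δ - μ) ^ 2) • (G * G * M)) i j := by
    intro i j
    have h1 : 0 ≤ (G * G * M) i j := mul_nonneg_entry (mul_nonneg_entry hGnn hGnn) hMnn i j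
    have h2 : (0:ℝ) ≤ β * δ - μ := by nlinarith
    simp only [Matrix.add_apply, Matrix.smul_apply, smul_eq_mul]
    have h3 : (0:ℝ) ≤ 2 * β * (β * δ - μ) := by positivity
    have h4 : (0:ℝ) ≤ (β * δ - μ) ^ 2 := sq_nonneg _
    nlinarith [hGnn i j]
  have hbase : ∀ i j, 0 ≤ (β ^ 2 • (1 : Matrix (Fin n) (Fin n) ℝ)
      + ((1 - β ^ 2) * δ) • G) i j := by
    intro i j
    simp only [Matrix.add_apply, Matrix.smul_apply, Matrix.one_apply, smul_eq_mul]
    have h5 : (0:ℝ) ≤ (1 - β ^ 2) * δ := by nlinarith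
    split_ifs with h <;> nlinarith [mul_nonneg h5 (hGnn i j)]
  have part2 : ∀ i j,
      (β ^ 2 • (1 : Matrix (Fin n) (Fin n) ℝ) + ((1 - β ^ 2) * δ) • G) i j ≤
        (δ • G + (β • (1 : Matrix (Fin n) (Fin n) ℝ) - μ • G) *
            (β • (1 : Matrix (Fin n) (Fin n) ℝ) - μ • G) * M) i j := by
    intro i j
    have h := hpos i j
    rw [key3]
    simp only [Matrix.add_apply] at h ⊢
    linarith
  have hBB : β ^ 2 • (1 : Matrix (Fin n) (Fin n) ℝ) + μ ^ 2 • (G * G) - (2 * β * μ) • G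
      = (β • (1 : Matrix (Fin n) (Fin n) ℝ) - μ • G) *
        (β • (1 : Matrix (Fin n) (Fin n) ℝ) - μ • G) := by
    simp only [Matrix.sub_mul, Matrix.mul_sub, Matrix.smul_mul, Matrix.mul_smul,
      smul_smul, Matrix.mul_one, Matrix.one_mul]
    module
  constructor
  · intro i j
    rw [hBB]
    calc (0:ℝ) ≤ (β ^ 2 • (1 : Matrix (Fin n) (Fin n) ℝ) + ((1 - β ^ 2) * δ) • G) i j :=
          hbase i j
      _ ≤ _ := part2 i j
  · intro i j
    exact part2 i j
end
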